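/- For every integer L ≥ 3 and every nonempty subset C ⊆ V with |V ∖ C| ≤ 5, the subgraph of G_L induced on C is connected. (Thus when the number of holes is smaller than the coordination number ζ = 6, every electron configuration is connected; this is the combinatorial core of Theorem 2 for the triangular lattice.) -/

import Mathlib

set_option linter.unusedSectionVars false
set_option linter.unnecessarySeqFocus false

namespace TriHoles

open Relation

variable {L : ℕ} [NeZero L]

/-- the six step directions -/
def stp (d : ZMod L × ZMod L) : Prop :=
  d = (1, 0) ∨ d = (-1, 0) ∨ d = (0, 1) ∨ d = (0, -1) ∨ d = (1, 1) ∨ d = (-1, -1)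

instance : DecidablePred (stp (L := L)) := fun d =>
  inferInstanceAs (Decidable (d = (1, 0) ∨ d = (-1, 0) ∨ d = (0, 1) ∨ d = (0, -1) ∨
    d = (1, 1) ∨ d = (-1, -1)))

/-- neighbour relation -/
def nb (x y : ZMod L × ZMod L) : Prop := stp (y - x)

instance : ∀ x y : ZMod L × ZMod L, Decidable (nb x y) := fun x y =>
  inferInstanceAs (Decidable (stp (y - x)))

/-- reachability within a set -/
def RC (S : Set (ZMod L × ZMod L)) : ZMod L × ZMod L → ZMod L × ZMod L → Prop :=
  Relation.ReflTransGen (fun x y => x ∈ S ∧ y ∈ S ∧ nb x y)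

lemma stp_neg {d : ZMod L × ZMod L} (h : stp d) : stp (-d) := by
  rcases h with rfl | rfl | rfl | rfl | rfl | rfl <;>
    simp [stp, Prod.ext_iff]

lemma nb_symm {x y : ZMod L × ZMod L} (h : nb x y) : nb y x := by
  have hxy : x - y = -(y - x) := by ring
  unfold nb at *
  rw [hxy]; exact stp_neg h

lemma rc_symm {S : Set (ZMod L × ZMod L)} {x y : ZMod L × ZMod L} (h : RC S x y) :
    RC S y x := by
  haveI : Std.Symm (fun x y : ZMod L × ZMod L => x ∈ S ∧ y ∈ S ∧ nb x y) := ⟨by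
    rintro a b ⟨ha, hb, hnb⟩
    exact ⟨hb, ha, nb_symm hnb⟩⟩
  exact (Relation.ReflTransGen.stdSymm (r := fun x y => x ∈ S ∧ y ∈ S ∧ nb x y)).symm x y h

lemma rc_step {S : Set (ZMod L × ZMod L)} {x y : ZMod L × ZMod L}
    (hx : x ∈ S) (hy : y ∈ S) (h : nb x y) : RC S x y :=
  Relation.ReflTransGen.single ⟨hx, hy, h⟩

lemma nb_add_step (v d : ZMod L × ZMod L) (h : stp d) : nb v (v + d) := by
  unfold nb; simpa using h

lemma rc_hor : ∀ (k : ℕ) (v : ZMod L × ZMod L),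
    RC Set.univ v (v + ((k : ZMod L), (0 : ZMod L))) := by
  intro k
  induction k with
  | zero => intro v; simp only [Nat.cast_zero, Prod.mk_zero_zero, add_zero]; exact Relation.ReflTransGen.refl
  | succ k ih =>
    intro v
    have e : v + (((k+1 : ℕ) : ZMod L), (0 : ZMod L))
        = (v + ((k : ZMod L), (0 : ZMod L))) + ((1 : ZMod L), (0 : ZMod L)) := by
      rw [Prod.ext_iff]; push_cast; constructor <;> simp <;> ring
    rw [e]
    exact (ih v).tail ⟨trivial, trivial, nb_add_step _ _ (Or.inl rfl)⟩

lemma rc_ver : ∀ (k : ℕ) (v : ZMod L × ZMod L),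
    RC Set.univ v (v + ((0 : ZMod L), (k : ZMod L))) := by
  intro k
  induction k with
  | zero => intro v; simp only [Nat.cast_zero, Prod.mk_zero_zero, add_zero]; exact Relation.ReflTransGen.refl
  | succ k ih =>
    intro v
    have e : v + ((0 : ZMod L), ((k+1 : ℕ) : ZMod L))
        = (v + ((0 : ZMod L), (k : ZMod L))) + ((0 : ZMod L), (1 : ZMod L)) := by
      rw [Prod.ext_iff]; push_cast; constructor <;> simp <;> ring
    rw [e]
    exact (ih v).tail ⟨trivial, trivial, nb_add_step _ _ (Or.inr (Or.inr (Or.inl rfl)))⟩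

lemma rc_univ (u v : ZMod L × ZMod L) : RC Set.univ u v := by
  have e : v = (u + (((v - u).1.val : ZMod L), (0 : ZMod L)))
      + ((0 : ZMod L), (((v - u).2.val : ZMod L))) := by
    rw [Prod.ext_iff]
    simp [ZMod.natCast_val, ZMod.cast_id]
  have := (rc_hor (v - u).1.val u).trans
    (rc_ver (v - u).2.val (u + (((v - u).1.val : ZMod L), (0 : ZMod L))))
  rwa [← e] at this


lemma getLast_cons_concat {α} {p q : α} {l : List α} :
    (p :: (l ++ [q])).getLast (List.cons_ne_nil _ _) = q := by
  rw [List.getLast_cons (by simp : l ++ [q] ≠ [])]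
  exact List.getLast_concat

lemma chain_rc {S : Set (ZMod L × ZMod L)} :
    ∀ (l : List (ZMod L × ZMod L)) (u : ZMod L × ZMod L),
      (∀ x ∈ u :: l, x ∈ S) → List.Chain nb u l →
      RC S u ((u :: l).getLast (List.cons_ne_nil _ _)) := by
  intro l
  induction l with
  | nil => intro u _ _; exact Relation.ReflTransGen.refl
  | cons w l ih =>
    intro u hmem hch
    unfold List.Chain at hch; rw [List.chain_cons] at hch
    have h1 : RC S u w := rc_step (hmem u (by simp)) (hmem w (by simp)) hch.1
    have h2 := ih w (fun x hx => hmem x (by simpa using Or.inr hx)) hch.2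
    have e : (u :: w :: l).getLast (List.cons_ne_nil _ _)
        = (w :: l).getLast (List.cons_ne_nil _ _) := by
      simp [List.getLast_cons]
    rw [e]
    exact h1.trans h2

/-- the key "5 disjoint paths + pigeonhole" lemma -/
lemma viaPaths (p q : ZMod L × ZMod L) (l1 l2 l3 l4 l5 : List (ZMod L × ZMod L))
    (hc1 : List.Chain nb p (l1 ++ [q])) (hc2 : List.Chain nb p (l2 ++ [q]))
    (hc3 : List.Chain nb p (l3 ++ [q])) (hc4 : List.Chain nb p (l4 ++ [q]))
    (hc5 : List.Chain nb p (l5 ++ [q]))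
    (hpw : ((0, 0) :: p :: q :: (l1 ++ l2 ++ l3 ++ l4 ++ l5)).Pairwise (· ≠ ·))
    {H : Set (ZMod L × ZMod L)} (h0 : ((0 : ZMod L), (0 : ZMod L)) ∈ H)
    (hcard : H.ncard ≤ 5) (hp : p ∉ H) (hq : q ∉ H) :
    RC Hᶜ p q := by
  classical
  -- the set of "other" holes
  set H' : Set (ZMod L × ZMod L) := H \ {((0 : ZMod L), (0 : ZMod L))} with hH'
  have hH'card : H'.ncard ≤ 4 := by
    rw [hH', Set.ncard_diff_singleton_of_mem h0]
    omega
  -- unpack pairwise distinctness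
  rw [List.pairwise_cons] at hpw
  obtain ⟨hz, hpw⟩ := hpw
  rw [List.pairwise_cons] at hpw
  obtain ⟨hpne, hpw⟩ := hpw
  rw [List.pairwise_cons] at hpw
  obtain ⟨hqne, hpw⟩ := hpw
  -- disjointness facts between blocks
  rw [List.append_assoc, List.append_assoc, List.append_assoc] at hpw hz
  rw [List.pairwise_append] at hpw
  obtain ⟨hpw1, hpw, hd1⟩ := hpw
  rw [List.pairwise_append] at hpw
  obtain ⟨hpw2, hpw, hd2⟩ := hpw
  rw [List.pairwise_append] at hpw
  obtain ⟨hpw3, hpw, hd3⟩ := hpw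
  rw [List.pairwise_append] at hpw
  obtain ⟨hpw4, hpw5, hd4⟩ := hpw
  -- a path all of whose internal vertices avoid H'
  have key : (∀ x ∈ l1, x ∉ H') ∨ (∀ x ∈ l2, x ∉ H') ∨ (∀ x ∈ l3, x ∉ H') ∨
      (∀ x ∈ l4, x ∉ H') ∨ (∀ x ∈ l5, x ∉ H') := by
    by_contra hcon
    push_neg at hcon
    obtain ⟨⟨x1, hx1, hx1'⟩, ⟨x2, hx2, hx2'⟩, ⟨x3, hx3, hx3'⟩, ⟨x4, hx4, hx4'⟩,
      ⟨x5, hx5, hx5'⟩⟩ := hcon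
    have d12 : x1 ≠ x2 := hd1 x1 hx1 x2 (by simp [hx2])
    have d13 : x1 ≠ x3 := hd1 x1 hx1 x3 (by simp [hx3])
    have d14 : x1 ≠ x4 := hd1 x1 hx1 x4 (by simp [hx4])
    have d15 : x1 ≠ x5 := hd1 x1 hx1 x5 (by simp [hx5])
    have d23 : x2 ≠ x3 := hd2 x2 hx2 x3 (by simp [hx3])
    have d24 : x2 ≠ x4 := hd2 x2 hx2 x4 (by simp [hx4])
    have d25 : x2 ≠ x5 := hd2 x2 hx2 x5 (by simp [hx5])
    have d34 : x3 ≠ x4 := hd3 x3 hx3 x4 (by simp [hx4])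
    have d35 : x3 ≠ x5 := hd3 x3 hx3 x5 (by simp [hx5])
    have d45 : x4 ≠ x5 := hd4 x4 hx4 x5 hx5
    have hsub : (↑({x1, x2, x3, x4, x5} : Finset (ZMod L × ZMod L)) : Set (ZMod L × ZMod L)) ⊆ H' := by
      intro x hx
      simp only [Finset.coe_insert, Set.mem_insert_iff, Finset.coe_singleton,
        Set.mem_singleton_iff] at hx
      rcases hx with rfl | rfl | rfl | rfl | rfl <;> assumption
    have hcard5 : ({x1, x2, x3, x4, x5} : Finset (ZMod L × ZMod L)).card = 5 := by
      rw [Finset.card_insert_of_notMem (by simp [d12, d13, d14, d15]),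
        Finset.card_insert_of_notMem (by simp [d23, d24, d25]),
        Finset.card_insert_of_notMem (by simp [d34, d35]),
        Finset.card_insert_of_notMem (by simp [d45]),
        Finset.card_singleton]
    have := Set.ncard_le_ncard hsub (Set.toFinite H')
    rw [Set.ncard_coe_finset, hcard5] at this
    omega
  -- memberships of p, q
  have hpC : p ∈ Hᶜ := hp
  have hqC : q ∈ Hᶜ := hq
  have main : ∀ (l : List (ZMod L × ZMod L)), List.Chain nb p (l ++ [q]) →
      (∀ x ∈ l, x ∉ H') → (∀ x ∈ l, x ≠ ((0:ZMod L),(0:ZMod L))) → RC Hᶜ p q := by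
    intro l hc hl hl0
    have hmem : ∀ x ∈ p :: (l ++ [q]), x ∈ Hᶜ := by
      intro x hx
      rcases List.mem_cons.mp hx with rfl | hx
      · exact hpC
      rcases List.mem_append.mp hx with hx | hx
      · intro hxH
        exact hl x hx ⟨hxH, hl0 x hx⟩
      · rw [List.mem_singleton] at hx; subst hx; exact hqC
    have := chain_rc (l ++ [q]) p hmem hc
    rwa [getLast_cons_concat] at this
  rcases key with h | h | h | h | h
  · exact main l1 hc1 h (fun x hx => (hz x (by simp [hx])).symm)
  · exact main l2 hc2 h (fun x hx => (hz x (by simp [hx])).symm)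
  · exact main l3 hc3 h (fun x hx => (hz x (by simp [hx])).symm)
  · exact main l4 hc4 h (fun x hx => (hz x (by simp [hx])).symm)
  · exact main l5 hc5 h (fun x hx => (hz x (by simp [hx])).symm)


/-! ### symmetry transport -/

/-- rotation by 60 degrees -/
def Mrot : (ZMod L × ZMod L) ≃ (ZMod L × ZMod L) where
  toFun z := (z.1 - z.2, z.1)
  invFun w := (w.2, w.2 - w.1)
  left_inv z := by apply Prod.ext <;> simp
  right_inv w := by apply Prod.ext <;> simp

lemma Mrot_sub (x y : ZMod L × ZMod L) : Mrot y - Mrot x = Mrot (y - x) := by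
  apply Prod.ext <;> simp [Mrot] <;> ring

lemma stp_Mrot {d : ZMod L × ZMod L} (h : stp d) : stp (Mrot d) := by
  rcases h with rfl | rfl | rfl | rfl | rfl | rfl <;>
    simp [stp, Mrot, Prod.ext_iff]

lemma nb_Mrot {x y : ZMod L × ZMod L} (h : nb x y) : nb (Mrot x) (Mrot y) := by
  unfold nb at *
  rw [Mrot_sub]
  exact stp_Mrot h

lemma rc_lift (e : (ZMod L × ZMod L) ≃ (ZMod L × ZMod L))
    (he : ∀ x y, nb x y → nb (e x) (e y)) {S : Set (ZMod L × ZMod L)}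
    {u v : ZMod L × ZMod L} (h : RC S u v) : RC (e '' S) (e u) (e v) := by
  refine Relation.ReflTransGen.lift e ?_ _ _ h
  rintro a b ⟨ha, hb, hn⟩
  exact ⟨Set.mem_image_of_mem _ ha, Set.mem_image_of_mem _ hb, he _ _ hn⟩

def IsCore (p q : ZMod L × ZMod L) : Prop :=
  ∀ H : Set (ZMod L × ZMod L), ((0 : ZMod L), (0 : ZMod L)) ∈ H → H.ncard ≤ 5 →
    p ∉ H → q ∉ H → RC Hᶜ p q

lemma preimage_ncard (e : (ZMod L × ZMod L) ≃ (ZMod L × ZMod L))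
    (H : Set (ZMod L × ZMod L)) : (⇑e ⁻¹' H).ncard = H.ncard := by
  have h1 : ⇑e ⁻¹' H = ⇑e.symm '' H := by
    rw [Equiv.image_eq_preimage_symm, Equiv.symm_symm]
  rw [h1, Set.ncard_image_of_injective _ e.symm.injective]

lemma isCore_rot {p q p' q' : ZMod L × ZMod L} (h : IsCore p q)
    (hp : p' = Mrot p) (hq : q' = Mrot q) : IsCore p' q' := by
  subst hp hq
  intro H h0 hc hp' hq'
  have hM0 : Mrot ((0 : ZMod L), (0 : ZMod L)) = ((0 : ZMod L), (0 : ZMod L)) := by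
    simp [Mrot]
  have h0' : ((0 : ZMod L), (0 : ZMod L)) ∈ ⇑Mrot ⁻¹' H := by
    simp only [Set.mem_preimage, hM0]; exact h0
  have hrc := h (⇑Mrot ⁻¹' H) h0' (by rw [preimage_ncard]; exact hc) hp' hq'
  have := rc_lift Mrot (fun x y => nb_Mrot) hrc
  rwa [show ⇑Mrot '' (⇑Mrot ⁻¹' H)ᶜ = Hᶜ by
    rw [Set.image_compl_eq Mrot.bijective, Set.image_preimage_eq H Mrot.surjective]] at this

lemma isCore_symm {p q : ZMod L × ZMod L} (h : IsCore p q) : IsCore q p :=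
  fun H h0 hc hq hp => rc_symm (h H h0 hc hp hq)

lemma hexagon0 (cA : IsCore ((1 : ZMod L), (0 : ZMod L)) (1, 1))
    (cB : IsCore ((1 : ZMod L), (0 : ZMod L)) (0, 1))
    (cC : IsCore ((1 : ZMod L), (0 : ZMod L)) (-1, 0)) :
    ∀ a b : ZMod L × ZMod L, stp a → stp b →
      ∀ H : Set (ZMod L × ZMod L), ((0 : ZMod L), (0 : ZMod L)) ∈ H → H.ncard ≤ 5 →
        a ∉ H → b ∉ H → RC Hᶜ a b := by
  have r12 := cA
  have r23 : IsCore ((1:ZMod L), (1:ZMod L)) (0, 1) := isCore_rot cA (by simp [Mrot]) (by simp [Mrot])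
  have r34 : IsCore ((0:ZMod L), (1:ZMod L)) (-1, 0) := isCore_rot r23 (by simp [Mrot]) (by simp [Mrot])
  have r45 : IsCore ((-1:ZMod L), (0:ZMod L)) (-1, -1) := isCore_rot r34 (by simp [Mrot]) (by simp [Mrot])
  have r56 : IsCore ((-1:ZMod L), (-1:ZMod L)) (0, -1) := isCore_rot r45 (by simp [Mrot]) (by simp [Mrot])
  have r61 : IsCore ((0:ZMod L), (-1:ZMod L)) (1, 0) := isCore_rot r56 (by simp [Mrot]) (by simp [Mrot])
  have r13 := cB
  have r24 : IsCore ((1:ZMod L), (1:ZMod L)) (-1, 0) := isCore_rot cB (by simp [Mrot]) (by simp [Mrot])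
  have r35 : IsCore ((0:ZMod L), (1:ZMod L)) (-1, -1) := isCore_rot r24 (by simp [Mrot]) (by simp [Mrot])
  have r46 : IsCore ((-1:ZMod L), (0:ZMod L)) (0, -1) := isCore_rot r35 (by simp [Mrot]) (by simp [Mrot])
  have r51 : IsCore ((-1:ZMod L), (-1:ZMod L)) (1, 0) := isCore_rot r46 (by simp [Mrot]) (by simp [Mrot])
  have r62 : IsCore ((0:ZMod L), (-1:ZMod L)) (1, 1) := isCore_rot r51 (by simp [Mrot]) (by simp [Mrot])
  have r14 := cC
  have r25 : IsCore ((1:ZMod L), (1:ZMod L)) (-1, -1) := isCore_rot cC (by simp [Mrot]) (by simp [Mrot])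
  have r36 : IsCore ((0:ZMod L), (1:ZMod L)) (0, -1) := isCore_rot r25 (by simp [Mrot]) (by simp [Mrot])
  intro a b ha hb H h0 hcard haH hbH
  rcases ha with rfl | rfl | rfl | rfl | rfl | rfl
  · rcases hb with rfl | rfl | rfl | rfl | rfl | rfl
    · exact Relation.ReflTransGen.refl
    · exact r14 H h0 hcard haH hbH
    · exact r13 H h0 hcard haH hbH
    · exact isCore_symm r61 H h0 hcard haH hbH
    · exact r12 H h0 hcard haH hbH
    · exact isCore_symm r51 H h0 hcard haH hbH
  · rcases hb with rfl | rfl | rfl | rfl | rfl | rfl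
    · exact isCore_symm r14 H h0 hcard haH hbH
    · exact Relation.ReflTransGen.refl
    · exact isCore_symm r34 H h0 hcard haH hbH
    · exact r46 H h0 hcard haH hbH
    · exact isCore_symm r24 H h0 hcard haH hbH
    · exact r45 H h0 hcard haH hbH
  · rcases hb with rfl | rfl | rfl | rfl | rfl | rfl
    · exact isCore_symm r13 H h0 hcard haH hbH
    · exact r34 H h0 hcard haH hbH
    · exact Relation.ReflTransGen.refl
    · exact r36 H h0 hcard haH hbH
    · exact isCore_symm r23 H h0 hcard haH hbH
    · exact r35 H h0 hcard haH hbH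
  · rcases hb with rfl | rfl | rfl | rfl | rfl | rfl
    · exact r61 H h0 hcard haH hbH
    · exact isCore_symm r46 H h0 hcard haH hbH
    · exact isCore_symm r36 H h0 hcard haH hbH
    · exact Relation.ReflTransGen.refl
    · exact r62 H h0 hcard haH hbH
    · exact isCore_symm r56 H h0 hcard haH hbH
  · rcases hb with rfl | rfl | rfl | rfl | rfl | rfl
    · exact isCore_symm r12 H h0 hcard haH hbH
    · exact r24 H h0 hcard haH hbH
    · exact r23 H h0 hcard haH hbH
    · exact isCore_symm r62 H h0 hcard haH hbH
    · exact Relation.ReflTransGen.refl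
    · exact r25 H h0 hcard haH hbH
  · rcases hb with rfl | rfl | rfl | rfl | rfl | rfl
    · exact r51 H h0 hcard haH hbH
    · exact isCore_symm r45 H h0 hcard haH hbH
    · exact isCore_symm r35 H h0 hcard haH hbH
    · exact r56 H h0 hcard haH hbH
    · exact isCore_symm r25 H h0 hcard haH hbH
    · exact Relation.ReflTransGen.refl

/-- from the origin-based hexagon lemma to the general one, by translation -/
lemma hex_all
    (hex0 : ∀ a b : ZMod L × ZMod L, stp a → stp b →
      ∀ H : Set (ZMod L × ZMod L), ((0 : ZMod L), (0 : ZMod L)) ∈ H → H.ncard ≤ 5 →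
        a ∉ H → b ∉ H → RC Hᶜ a b) :
    ∀ H : Set (ZMod L × ZMod L), H.ncard ≤ 5 → ∀ h ∈ H, ∀ a b : ZMod L × ZMod L,
      nb h a → nb h b → a ∉ H → b ∉ H → RC Hᶜ a b := by
  intro H hcard h hh a b hna hnb haH hbH
  set e : (ZMod L × ZMod L) ≃ (ZMod L × ZMod L) := Equiv.addRight h with he
  have hepls : ∀ z : ZMod L × ZMod L, e z = z + h := fun z => rfl
  have hnbe : ∀ x y : ZMod L × ZMod L, nb x y → nb (e x) (e y) := by
    intro x y hxy
    unfold nb at *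
    rw [hepls, hepls, show y + h - (x + h) = y - x by ring]
    exact hxy
  have h0 : ((0 : ZMod L), (0 : ZMod L)) ∈ ⇑e ⁻¹' H := by
    have : e ((0 : ZMod L), (0 : ZMod L)) = h := by
      rw [hepls]
      apply Prod.ext <;> simp
    simp only [Set.mem_preimage, this]; exact hh
  have hsa : stp (a - h) := hna
  have hsb : stp (b - h) := hnb
  have hrc := hex0 (a - h) (b - h) hsa hsb (⇑e ⁻¹' H) h0
    (by rw [preimage_ncard]; exact hcard)
    (by simp only [Set.mem_preimage, hepls, sub_add_cancel]; exact haH)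
    (by simp only [Set.mem_preimage, hepls, sub_add_cancel]; exact hbH)
  have := rc_lift e hnbe hrc
  rw [show ⇑e '' (⇑e ⁻¹' H)ᶜ = Hᶜ by
    rw [Set.image_compl_eq e.bijective, Set.image_preimage_eq H e.surjective],
    hepls, hepls, sub_add_cancel, sub_add_cancel] at this
  exact this

/-! ### removing one hole at a time -/

lemma splice {C : Set (ZMod L × ZMod L)} {h : ZMod L × ZMod L}
    (hs0 : ¬ stp (0 : ZMod L × ZMod L)) (hhC : h ∉ C)
    (hexh : ∀ a b, nb h a → nb h b → a ∈ C → b ∈ C → RC C a b) :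
    ∀ (n : ℕ) (l : List (ZMod L × ZMod L)) (u v : ZMod L × ZMod L),
      l.length ≤ n → u ∈ C → v ∈ C →
      List.Chain (fun x y => x ∈ C ∪ {h} ∧ y ∈ C ∪ {h} ∧ nb x y) u l →
      (u :: l).getLast (List.cons_ne_nil _ _) = v → RC C u v := by
  intro n
  induction n with
  | zero =>
    intro l u v hlen hu hv hch hlast
    have : l = [] := List.eq_nil_of_length_eq_zero (Nat.le_zero.mp hlen)
    subst this
    simp only [List.getLast_singleton] at hlast
    subst hlast
    exact Relation.ReflTransGen.refl
  | succ n ih =>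
    intro l u v hlen hu hv hch hlast
    cases l with
    | nil =>
      simp only [List.getLast_singleton] at hlast
      subst hlast
      exact Relation.ReflTransGen.refl
    | cons w l' =>
      unfold List.Chain at hch; rw [List.chain_cons] at hch
      obtain ⟨⟨huS, hwS, hnuw⟩, hch'⟩ := hch
      have e1 : (u :: w :: l').getLast (List.cons_ne_nil _ _)
          = (w :: l').getLast (List.cons_ne_nil _ _) := by
        simp [List.getLast_cons]
      rw [e1] at hlast
      rcases hwS with hwC | hwh
      · have step : RC C u w := rc_step hu hwC hnuw
        exact step.trans (ih l' w v (by simpa using Nat.le_of_succ_le_succ (by simpa using hlen))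
          hwC hv hch' hlast)
      · have hwh' : w = h := hwh
        subst hwh'
        cases l' with
        | nil =>
          simp only [List.getLast_singleton] at hlast
          exact absurd (hlast ▸ hv) hhC
        | cons w' l'' =>
          rw [List.chain_cons] at hch'
          obtain ⟨⟨_, hw'S, hnww'⟩, hch''⟩ := hch'
          have hw'C : w' ∈ C := by
            rcases hw'S with h1 | h1
            · exact h1
            · exfalso
              have : w' = w := h1
              subst this
              have : stp (0 : ZMod L × ZMod L) := by
                have := hnww'
                unfold nb at this
                rwa [sub_self] at this
              exact hs0 this
          have hfirst : RC C u w' := hexh u w' (nb_symm hnuw) hnww' hu hw'C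
          have e2 : (w :: w' :: l'').getLast (List.cons_ne_nil _ _)
              = (w' :: l'').getLast (List.cons_ne_nil _ _) := by
            simp [List.getLast_cons]
          rw [e2] at hlast
          have hlen'' : l''.length ≤ n := by
            simp only [List.length_cons] at hlen
            omega
          exact hfirst.trans (ih l'' w' v hlen'' hw'C hv hch'' hlast)

lemma main_induction (hs0 : ¬ stp (0 : ZMod L × ZMod L))
    (hexAll : ∀ H : Set (ZMod L × ZMod L), H.ncard ≤ 5 → ∀ h ∈ H,
      ∀ a b : ZMod L × ZMod L, nb h a → nb h b → a ∉ H → b ∉ H → RC Hᶜ a b) :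
    ∀ (n : ℕ) (H : Set (ZMod L × ZMod L)), H.ncard ≤ n → n ≤ 5 →
      ∀ u v : ZMod L × ZMod L, u ∉ H → v ∉ H → RC Hᶜ u v := by
  intro n
  induction n with
  | zero =>
    intro H hcard _ u v hu hv
    have : H = ∅ := by
      rw [← Set.ncard_eq_zero (Set.toFinite H)]
      omega
    rw [this, Set.compl_empty]
    exact rc_univ u v
  | succ n ih =>
    intro H hcard hn5 u v hu hv
    rcases Set.eq_empty_or_nonempty H with rfl | ⟨h, hh⟩
    · rw [Set.compl_empty]; exact rc_univ u v
    · have hc' : (H \ {h}).ncard ≤ n := by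
        rw [Set.ncard_diff_singleton_of_mem hh]
        omega
      have IH := ih (H \ {h}) hc' (by omega) u v (fun hx => hu hx.1) (fun hx => hv hx.1)
      have hset : (H \ {h})ᶜ = Hᶜ ∪ {h} := by
        ext x
        simp only [Set.mem_compl_iff, Set.mem_diff, Set.mem_union, Set.mem_singleton_iff]
        by_cases hxh : x = h
        · subst hxh; tauto
        · tauto
      obtain ⟨l, hch, hlast⟩ := List.exists_isChain_cons_of_relationReflTransGen IH
      rw [hset] at hch
      have hexh : ∀ a b, nb h a → nb h b → a ∈ Hᶜ → b ∈ Hᶜ → RC Hᶜ a b :=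
        fun a b hna hnb ha hb => hexAll H (le_trans hcard hn5) h hh a b hna hnb ha hb
      exact splice hs0 (by simp [hh]) hexh l.length l u v le_rfl hu hv hch hlast


/-! ### integer coordinates -/

def castV (z : ℤ × ℤ) : ZMod L × ZMod L := ((z.1 : ZMod L), (z.2 : ZMod L))

def stpZ (d : ℤ × ℤ) : Prop :=
  d = (1, 0) ∨ d = (-1, 0) ∨ d = (0, 1) ∨ d = (0, -1) ∨ d = (1, 1) ∨ d = (-1, -1)

instance : DecidablePred stpZ := fun d =>
  inferInstanceAs (Decidable (d = (1, 0) ∨ d = (-1, 0) ∨ d = (0, 1) ∨ d = (0, -1) ∨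
    d = (1, 1) ∨ d = (-1, -1)))

lemma castV_sub (a b : ℤ × ℤ) : castV (L := L) a - castV b = castV (a - b) := by
  unfold castV
  apply Prod.ext <;> simp [Prod.fst_sub, Prod.snd_sub]

lemma nb_cast {a b : ℤ × ℤ} (h : stpZ (b - a)) : nb (castV (L := L) a) (castV b) := by
  unfold nb
  rw [castV_sub]
  rcases h with h | h | h | h | h | h <;> rw [h] <;> simp [castV, stp]

lemma chain_cast {a : ℤ × ℤ} {l : List (ℤ × ℤ)}
    (h : List.Chain (fun x y => stpZ (y - x)) a l) :
    List.Chain nb (castV (L := L) a) (l.map castV) :=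
  List.isChain_map_of_isChain castV (fun _ _ hxy => nb_cast hxy) h

lemma castV_inj_window (hL : 6 ≤ L) {a b : ℤ × ℤ} (hne : a ≠ b)
    (h1 : |a.1 - b.1| < 6) (h2 : |a.2 - b.2| < 6) : castV (L := L) a ≠ castV b := by
  intro h
  have e1 : ((a.1 : ZMod L)) = (b.1 : ZMod L) := congrArg Prod.fst h
  have e2 : ((a.2 : ZMod L)) = (b.2 : ZMod L) := congrArg Prod.snd h
  have hL' : (6 : ℤ) ≤ (L : ℤ) := by exact_mod_cast hL
  have d1 : a.1 = b.1 := by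
    have : ((a.1 - b.1 : ℤ) : ZMod L) = 0 := by push_cast; rw [e1]; ring
    have := (ZMod.intCast_zmod_eq_zero_iff_dvd _ _).mp this
    have := Int.eq_zero_of_abs_lt_dvd this (lt_of_lt_of_le h1 hL')
    omega
  have d2 : a.2 = b.2 := by
    have : ((a.2 - b.2 : ℤ) : ZMod L) = 0 := by push_cast; rw [e2]; ring
    have := (ZMod.intCast_zmod_eq_zero_iff_dvd _ _).mp this
    have := Int.eq_zero_of_abs_lt_dvd this (lt_of_lt_of_le h2 hL')
    omega
  exact hne (Prod.ext d1 d2)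

lemma pairwise_cast (hL : 6 ≤ L) {l : List (ℤ × ℤ)}
    (h : l.Pairwise (fun a b => a ≠ b ∧ |a.1 - b.1| < 6 ∧ |a.2 - b.2| < 6)) :
    (l.map (castV (L := L))).Pairwise (· ≠ ·) := by
  rw [List.pairwise_map]
  exact h.imp (fun h => castV_inj_window hL h.1 h.2.1 h.2.2)

/-! ### the generic (L ≥ 6) core path families -/

lemma isCore_cast (hL : 6 ≤ L) (pZ qZ : ℤ × ℤ) (z1 z2 z3 z4 z5 : List (ℤ × ℤ))
    (hc1 : List.Chain (fun x y => stpZ (y - x)) pZ (z1 ++ [qZ]))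
    (hc2 : List.Chain (fun x y => stpZ (y - x)) pZ (z2 ++ [qZ]))
    (hc3 : List.Chain (fun x y => stpZ (y - x)) pZ (z3 ++ [qZ]))
    (hc4 : List.Chain (fun x y => stpZ (y - x)) pZ (z4 ++ [qZ]))
    (hc5 : List.Chain (fun x y => stpZ (y - x)) pZ (z5 ++ [qZ]))
    (hpw : ((0, 0) :: pZ :: qZ :: (z1 ++ z2 ++ z3 ++ z4 ++ z5)).Pairwise
      (fun a b => a ≠ b ∧ |a.1 - b.1| < 6 ∧ |a.2 - b.2| < 6)) :
    IsCore (castV (L := L) pZ) (castV qZ) := by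
  intro H h0 hc hp hq
  have h00 : castV (L := L) ((0 : ℤ), (0 : ℤ)) = ((0 : ZMod L), (0 : ZMod L)) := by
    simp [castV]
  refine viaPaths (castV pZ) (castV qZ) (z1.map castV) (z2.map castV) (z3.map castV)
    (z4.map castV) (z5.map castV) ?_ ?_ ?_ ?_ ?_ ?_ h0 hc hp hq
  · simpa using chain_cast (L := L) hc1
  · simpa using chain_cast (L := L) hc2
  · simpa using chain_cast (L := L) hc3
  · simpa using chain_cast (L := L) hc4
  · simpa using chain_cast (L := L) hc5
  · have := pairwise_cast hL hpw
    rw [show (((0:ℤ),(0:ℤ)) :: pZ :: qZ :: (z1 ++ z2 ++ z3 ++ z4 ++ z5)).map castV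
      = ((0,0) : ZMod L × ZMod L) :: castV pZ :: castV qZ ::
        (z1.map castV ++ z2.map castV ++ z3.map castV ++ z4.map castV ++ z5.map castV) by
      simp [castV]] at this
    exact this

lemma coreA_generic (hL : 6 ≤ L) : IsCore ((1 : ZMod L), (0 : ZMod L)) (1, 1) := by
  have := isCore_cast hL (1, 0) (1, 1)
    []
    [(2, 1)]
    [(2, 0), (3, 1), (3, 2), (2, 2)]
    [(0, -1), (-1, -1), (-1, 0), (-1, 1), (0, 1)]
    [(1, -1), (0, -2), (-1, -2), (-2, -2), (-2, -1), (-2, 0), (-2, 1), (-1, 2), (0, 2), (1, 2)]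
    (by simp only [List.cons_append, List.nil_append, List.Chain, List.chain_cons, List.Chain.nil,
      and_true]; decide)
    (by simp only [List.cons_append, List.nil_append, List.Chain, List.chain_cons, List.Chain.nil,
      and_true]; decide)
    (by simp only [List.cons_append, List.nil_append, List.Chain, List.chain_cons, List.Chain.nil,
      and_true]; decide)
    (by simp only [List.cons_append, List.nil_append, List.Chain, List.chain_cons, List.Chain.nil,
      and_true]; decide)
    (by simp only [List.cons_append, List.nil_append, List.Chain, List.chain_cons, List.Chain.nil,
      and_true]; decide)
    (by decide)
  simpa [castV] using this

lemma coreB_generic (hL : 6 ≤ L) : IsCore ((1 : ZMod L), (0 : ZMod L)) (0, 1) := by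
  have := isCore_cast hL (1, 0) (0, 1)
    [(1, 1)]
    [(2, 1), (2, 2), (1, 2)]
    [(0, -1), (-1, -1), (-1, 0)]
    [(2, 0), (3, 1), (3, 2), (3, 3), (2, 3), (1, 3), (0, 2)]
    [(1, -1), (0, -2), (-1, -2), (-2, -2), (-2, -1), (-2, 0), (-1, 1)]
    (by simp only [List.cons_append, List.nil_append, List.Chain, List.chain_cons, List.Chain.nil,
      and_true]; decide)
    (by simp only [List.cons_append, List.nil_append, List.Chain, List.chain_cons, List.Chain.nil,
      and_true]; decide)
    (by simp only [List.cons_append, List.nil_append, List.Chain, List.chain_cons, List.Chain.nil,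
      and_true]; decide)
    (by simp only [List.cons_append, List.nil_append, List.Chain, List.chain_cons, List.Chain.nil,
      and_true]; decide)
    (by simp only [List.cons_append, List.nil_append, List.Chain, List.chain_cons, List.Chain.nil,
      and_true]; decide)
    (by decide)
  simpa [castV] using this

lemma coreC_generic (hL : 6 ≤ L) : IsCore ((1 : ZMod L), (0 : ZMod L)) (-1, 0) := by
  have := isCore_cast hL (1, 0) (-1, 0)
    [(1, 1), (0, 1)]
    [(0, -1), (-1, -1)]
    [(1, -1), (0, -2), (-1, -2), (-2, -2), (-2, -1)]
    [(2, 1), (2, 2), (1, 2), (0, 2), (-1, 1)]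
    [(2, 0), (2, -1), (1, -2), (0, -3), (-1, -3), (-2, -3), (-3, -3), (-3, -2), (-3, -1), (-2, 0)]
    (by simp only [List.cons_append, List.nil_append, List.Chain, List.chain_cons, List.Chain.nil,
      and_true]; decide)
    (by simp only [List.cons_append, List.nil_append, List.Chain, List.chain_cons, List.Chain.nil,
      and_true]; decide)
    (by simp only [List.cons_append, List.nil_append, List.Chain, List.chain_cons, List.Chain.nil,
      and_true]; decide)
    (by simp only [List.cons_append, List.nil_append, List.Chain, List.chain_cons, List.Chain.nil,
      and_true]; decide)
    (by simp only [List.cons_append, List.nil_append, List.Chain, List.chain_cons, List.Chain.nil,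
      and_true]; decide)
    (by decide)
  simpa [castV] using this


/-! ### small L cores -/

lemma coreA4 : IsCore ((1 : ZMod 4), (0 : ZMod 4)) (1, 1) := by
  intro H h0 hc hp hq
  refine viaPaths _ _ [] [(2,1)] [(2,0),(3,1),(3,2),(2,2)] [(0,3),(3,3),(3,0),(0,1)]
    [(1,3),(2,3),(1,2)] ?_ ?_ ?_ ?_ ?_ ?_ h0 hc hp hq <;>
  first
    | decide
    | (simp only [List.cons_append, List.nil_append, List.Chain, List.chain_cons, List.Chain.nil,
        and_true]; decide)

lemma coreB4 : IsCore ((1 : ZMod 4), (0 : ZMod 4)) (0, 1) := by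
  intro H h0 hc hp hq
  refine viaPaths _ _ [(1,1)] [(2,1),(2,2),(1,2)] [(0,3),(3,3),(3,0)] [(2,0),(3,1)]
    [(1,3),(0,2)] ?_ ?_ ?_ ?_ ?_ ?_ h0 hc hp hq <;>
  first
    | decide
    | (simp only [List.cons_append, List.nil_append, List.Chain, List.chain_cons, List.Chain.nil,
        and_true]; decide)

lemma coreC4 : IsCore ((1 : ZMod 4), (0 : ZMod 4)) (-1, 0) := by
  intro H h0 hc hp hq
  refine viaPaths _ _ [(2,0)] [(1,1),(0,1)] [(0,3),(3,3)] [(1,3),(2,3)]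
    [(2,1),(3,1)] ?_ ?_ ?_ ?_ ?_ ?_ h0 hc hp hq <;>
  first
    | decide
    | (simp only [List.cons_append, List.nil_append, List.Chain, List.chain_cons, List.Chain.nil,
        and_true]; decide)

lemma coreA5 : IsCore ((1 : ZMod 5), (0 : ZMod 5)) (1, 1) := by
  intro H h0 hc hp hq
  refine viaPaths _ _ [] [(2,1)] [(2,0),(3,1),(3,2),(2,2)] [(0,4),(4,4),(4,0),(4,1),(0,1)]
    [(1,4),(1,3),(0,2),(1,2)] ?_ ?_ ?_ ?_ ?_ ?_ h0 hc hp hq <;>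
  first
    | decide
    | (simp only [List.cons_append, List.nil_append, List.Chain, List.chain_cons, List.Chain.nil,
        and_true]; decide)

lemma coreB5 : IsCore ((1 : ZMod 5), (0 : ZMod 5)) (0, 1) := by
  intro H h0 hc hp hq
  refine viaPaths _ _ [(1,1)] [(2,1),(2,2),(1,2)] [(0,4),(4,4),(4,0)]
    [(2,0),(3,1),(3,2),(3,3),(2,3),(1,3),(0,2)] [(1,4),(2,4),(3,4),(3,0),(4,1)]
    ?_ ?_ ?_ ?_ ?_ ?_ h0 hc hp hq <;>
  first
    | decide
    | (simp only [List.cons_append, List.nil_append, List.Chain, List.chain_cons, List.Chain.nil,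
        and_true]; decide)

lemma coreC5 : IsCore ((1 : ZMod 5), (0 : ZMod 5)) (-1, 0) := by
  intro H h0 hc hp hq
  refine viaPaths _ _ [(1,1),(0,1)] [(0,4),(4,4)] [(1,4),(0,3),(4,3),(3,3),(3,4)]
    [(2,1),(2,2),(1,2),(0,2),(4,1)] [(2,0),(3,0)] ?_ ?_ ?_ ?_ ?_ ?_ h0 hc hp hq <;>
  first
    | decide
    | (simp only [List.cons_append, List.nil_append, List.Chain, List.chain_cons, List.Chain.nil,
        and_true]; decide)

/-! ### the case L = 3 : the graph is K_{3,3,3} -/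

lemma rc3 (C : Set (ZMod 3 × ZMod 3)) (hcard : (Cᶜ).ncard ≤ 5) :
    ∀ u v, u ∈ C → v ∈ C → RC C u v := by
  intro u v hu hv
  by_cases huv : u = v
  · subst huv; exact Relation.ReflTransGen.refl
  by_cases hnbuv : nb u v
  · exact rc_step hu hv hnbuv
  -- u and v lie in a common "part"
  have hdvu : v - u = (1, 2) ∨ v - u = (2, 1) := by
    have h1 : v - u ≠ 0 := sub_ne_zero.mpr (Ne.symm huv)
    have h2 : ¬ stp (v - u) := hnbuv
    revert h1 h2
    generalize v - u = d
    revert d; decide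
  have hncard : 4 ≤ C.ncard := by
    have h9 : C.ncard + (Cᶜ).ncard = 9 := by
      rw [Set.ncard_add_ncard_compl, Nat.card_eq_fintype_card, Fintype.card_prod, ZMod.card]
    omega
  have hnsub : ¬ C ⊆ {u, u + (1, 2), u + (2, 1)} := by
    intro hsub
    have h3 : C.ncard ≤ 3 := by
      refine le_trans (Set.ncard_le_ncard hsub (Set.toFinite _)) ?_
      refine le_trans (Set.ncard_insert_le _ _) ?_
      have := Set.ncard_insert_le (u + ((1 : ZMod 3), (2 : ZMod 3))) {u + (2, 1)}
      simp only [Set.ncard_singleton] at this ⊢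
      omega
    omega
  obtain ⟨w, hwC, hwP⟩ := Set.not_subset.mp hnsub
  simp only [Set.mem_insert_iff, Set.mem_singleton_iff, not_or] at hwP
  obtain ⟨hw1, hw2, hw3⟩ := hwP
  have hd1 : w - u ≠ 0 := sub_ne_zero.mpr hw1
  have hd2 : w - u ≠ (1, 2) := fun h => hw2 (by rw [← h]; ring)
  have hd3 : w - u ≠ (2, 1) := fun h => hw3 (by rw [← h]; ring)
  have key1 : ∀ d : ZMod 3 × ZMod 3, d ≠ 0 → d ≠ (1, 2) → d ≠ (2, 1) → stp d := by decide
  have key2 : ∀ d : ZMod 3 × ZMod 3, d ≠ 0 → d ≠ (1, 2) → d ≠ (2, 1) →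
      stp (((1 : ZMod 3), (2 : ZMod 3)) - d) := by decide
  have key3 : ∀ d : ZMod 3 × ZMod 3, d ≠ 0 → d ≠ (1, 2) → d ≠ (2, 1) →
      stp (((2 : ZMod 3), (1 : ZMod 3)) - d) := by decide
  have hnb1 : nb u w := key1 (w - u) hd1 hd2 hd3
  have hnb2 : nb w v := by
    have hvw : v - w = (v - u) - (w - u) := by ring
    unfold nb
    rw [hvw]
    rcases hdvu with h | h <;> rw [h]
    · exact key2 (w - u) hd1 hd2 hd3
    · exact key3 (w - u) hd1 hd2 hd3
  exact (rc_step hu hwC hnb1).trans (rc_step hwC hv hnb2)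

/-! ### no zero step -/

lemma not_stp_zero (hL : 3 ≤ L) : ¬ stp (0 : ZMod L × ZMod L) := by
  haveI : Fact (1 < L) := ⟨by omega⟩
  have h1 : (1 : ZMod L) ≠ 0 := one_ne_zero
  intro h
  rcases h with h | h | h | h | h | h
  · exact h1 (congrArg Prod.fst h).symm
  · exact h1 (neg_eq_zero.mp (congrArg Prod.fst h).symm)
  · exact h1 (congrArg Prod.snd h).symm
  · exact h1 (neg_eq_zero.mp (congrArg Prod.snd h).symm)
  · exact h1 (congrArg Prod.fst h).symm
  · exact h1 (neg_eq_zero.mp (congrArg Prod.fst h).symm)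

/-- from abstract reachability to reachability in the induced graph -/
lemma rc_reachable (G : SimpleGraph (ZMod L × ZMod L))
    (hG : ∀ x y : ZMod L × ZMod L, G.Adj x y ↔ x ≠ y ∧
      (y - x = (1, 0) ∨ y - x = (-1, 0) ∨ y - x = (0, 1) ∨
       y - x = (0, -1) ∨ y - x = (1, 1) ∨ y - x = (-1, -1)))
    (hs0 : ¬ stp (0 : ZMod L × ZMod L)) {C : Set (ZMod L × ZMod L)}
    {u v : ZMod L × ZMod L} (h : RC C u v) :
    ∀ (hu : u ∈ C) (hv : v ∈ C), (G.induce C).Reachable ⟨u, hu⟩ ⟨v, hv⟩ := by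
  induction h with
  | refl => intro hu hv; exact SimpleGraph.Reachable.refl _
  | @tail b c hab hbc ih =>
    intro hu hv
    obtain ⟨hb, hc, hnb⟩ := hbc
    have hne : b ≠ c := by
      intro he
      rw [he] at hnb
      apply hs0
      have : nb c c := hnb
      unfold nb at this
      rwa [sub_self] at this
    have hGadj : G.Adj b c := (hG b c).mpr ⟨hne, hnb⟩
    have hadj : (G.induce C).Adj ⟨b, hb⟩ ⟨c, hv⟩ := by
      simp only [SimpleGraph.comap_adj, Function.Embedding.coe_subtype]
      exact hGadj
    exact (ih hu hb).trans hadj.reachable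

/-- all configurations with at most 5 holes are RC-connected, for any L ≥ 3 -/
lemma rc_all (hL : 3 ≤ L) (C : Set (ZMod L × ZMod L)) (hcard : (Cᶜ).ncard ≤ 5) :
    ∀ u v, u ∈ C → v ∈ C → RC C u v := by
  have hs0 : ¬ stp (0 : ZMod L × ZMod L) := not_stp_zero hL
  have hL' : L = 3 ∨ L = 4 ∨ L = 5 ∨ 6 ≤ L := by omega
  have generic : ∀ (cA : IsCore ((1 : ZMod L), (0 : ZMod L)) (1, 1))
      (cB : IsCore ((1 : ZMod L), (0 : ZMod L)) (0, 1))
      (cC : IsCore ((1 : ZMod L), (0 : ZMod L)) (-1, 0)),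
      ∀ u v, u ∈ C → v ∈ C → RC C u v := by
    intro cA cB cC u v hu hv
    have hexAll := hex_all (hexagon0 cA cB cC)
    have := main_induction hs0 hexAll 5 Cᶜ hcard le_rfl u v
      (fun hx => hx hu) (fun hx => hx hv)
    rwa [compl_compl] at this
  rcases hL' with rfl | rfl | rfl | h6
  · exact rc3 C hcard
  · exact generic coreA4 coreB4 coreC4
  · exact generic coreA5 coreB5 coreC5
  · exact generic (coreA_generic h6) (coreB_generic h6) (coreC_generic h6)

end TriHoles

/-- On the triangular-lattice torus, every nonempty configuration `C` with at most 5
holes induces a connected subgraph. -/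
theorem triangular_few_holes_connected
    (L : ℕ) [NeZero L] (hL : 3 ≤ L)
    (G : SimpleGraph (ZMod L × ZMod L))
    (hG : ∀ x y : ZMod L × ZMod L, G.Adj x y ↔ x ≠ y ∧
      (y - x = (1, 0) ∨ y - x = (-1, 0) ∨ y - x = (0, 1) ∨
       y - x = (0, -1) ∨ y - x = (1, 1) ∨ y - x = (-1, -1)))
    (C : Set (ZMod L × ZMod L)) (hC : C.Nonempty)
    (hholes : (Cᶜ).ncard ≤ 5) :
    (G.induce C).Connected := by
  classical
  have hs0 : ¬ TriHoles.stp (0 : ZMod L × ZMod L) := TriHoles.not_stp_zero hL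
  haveI : Nonempty ↥C := hC.to_subtype
  rw [SimpleGraph.connected_iff]
  refine ⟨?_, inferInstance⟩
  rintro ⟨u, hu⟩ ⟨v, hv⟩
  exact TriHoles.rc_reachable G hG hs0 (TriHoles.rc_all hL C hholes u v hu hv) hu hv
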